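/- For every n ≥ 2, in the elimination-ordering characterization: for any ordering of the vertices of the primal graph of QParity_n that eliminates all of {z₁,…,z_n} before u and before all of {x₁,…,x_n}, the last eliminated vertex of {z₁,…,z_n} is adjacent in the fill-in graph to every vertex of {x₁,…,x_n} ∪ {u}, hence the ordering has width at least n+1. -/

import Mathlib

noncomputable section
attribute [local instance] Classical.propDecidable

/-- A literal is a variable with a polarity; a clause is a finite set of literals. -/
abbrev Clause (V : Type) := Finset (V × Bool)

/-- A CNF matrix is a finite set of clauses. -/
abbrev CNF (V : Type) := Finset (Clause V)

variable {V : Type}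

/-- A clause is tautological if it contains some variable in both polarities. -/
def Tauto (C : Clause V) : Prop := ∃ v : V, (v, true) ∈ C ∧ (v, false) ∈ C

/-- A variable occurs in a clause. -/
def varIn (v : V) (C : Clause V) : Prop := ∃ b : Bool, (v, b) ∈ C

def clauseSat (α : V → Bool) (C : Clause V) : Prop := ∃ l ∈ C, α l.1 = l.2

def cnfSat (α : V → Bool) (φ : CNF V) : Prop := ∀ C ∈ φ, clauseSat α C

/-- Truth of the QBF with existential variables `E`, universal variables `U`,
dependency relation `D` and matrix `φ`: there is a winning existential strategy,
i.e. a choice function for every existential variable that depends only on the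
universal variables it depends on (w.r.t. `D`), winning against every universal
assignment. -/
def QBFTrue (E U : Finset V) (D : V → V → Prop) (φ : CNF V) : Prop :=
  ∃ τ : V → (V → Bool) → Bool,
    (∀ x ∈ E, ∀ β β' : V → Bool, (∀ u ∈ U, D u x → β u = β' u) → τ x β = τ x β') ∧
    ∀ β : V → Bool, cnfSat (fun w => if w ∈ E then τ w β else β w) φ

/-- The clauses of `φ` containing the literal `x`. -/
def posCl (φ : CNF V) (x : V) : CNF V := φ.filter (fun C => (x, true) ∈ C)

/-- The clauses of `φ` containing the literal `¬x`. -/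
def negCl (φ : CNF V) (x : V) : CNF V := φ.filter (fun C => (x, false) ∈ C)

/-- `R(φ,x)`: all non-tautological resolvents `(C₁ \ {x}) ∪ (C₂ \ {¬x})` with
`C₁ ∈ φ_x` and `C₂ ∈ φ_{¬x}`. -/
def resolvents (φ : CNF V) (x : V) : CNF V :=
  ((posCl φ x ×ˢ negCl φ x).image
    (fun p => p.1.erase (x, true) ∪ p.2.erase (x, false))).filter (fun C => ¬ Tauto C)

/-- Resolution over `x` in `φ`. -/
def res (φ : CNF V) (x : V) : CNF V := (φ \ (posCl φ x ∪ negCl φ x)) ∪ resolvents φ x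

/-- Reduction of `u` from `φ`: delete both literals of `u` from every clause. -/
def red (φ : CNF V) (u : V) : CNF V :=
  φ.image (fun C => (C.erase (u, true)).erase (u, false))

/-- Restrict `φ` by the assignment `δ` on the variable set `S`: remove clauses
satisfied on `S` and delete falsified literals over `S`. -/
def restrict (φ : CNF V) (S : Finset V) (δ : V → Bool) : CNF V :=
  (φ.filter (fun C => ¬ ∃ l ∈ C, l.1 ∈ S ∧ δ l.1 = l.2)).image
    (fun C => C.filter (fun l => l.1 ∉ S))

/-- The combined assignment `(β, τ)`. -/
def combined (E : Finset V) (τ : V → (V → Bool) → Bool) (β : V → Bool) : V → Bool :=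
  fun w => if w ∈ E then τ w β else β w

/-- An existential strategy is valid if each `τ x` for existential `x` depends only on
the universal variables that `x` depends on. -/
def strategyValid (E U : Finset V) (D : V → V → Prop) (τ : V → (V → Bool) → Bool) : Prop :=
  ∀ x ∈ E, ∀ β β' : V → Bool, (∀ w ∈ U, D w x → β w = β' w) → τ x β = τ x β'

/-- Primal-graph adjacency: two distinct variables co-occur in some clause of `φ`. -/
def primalAdj (φ : CNF V) (a b : V) : Prop :=
  a ≠ b ∧ ∃ C ∈ φ, varIn a C ∧ varIn b C

/-- The variables of `QParity_n`. -/
inductive PVtx (n : ℕ) : Type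
  | x : Fin n → PVtx n
  | z : Fin n → PVtx n
  | u : PVtx n
  deriving DecidableEq

/-- The edges of the primal graph of `QParity_n` (before symmetrization):
`{x_i, z_i}`, `{x_{i+1}, z_i}`, `{z_i, z_{i+1}}` and `{u, z_n}` (all 0-indexed). -/
def parityRel (n : ℕ) : PVtx n → PVtx n → Prop
  | PVtx.x i, PVtx.z j => i = j ∨ (i : ℕ) = (j : ℕ) + 1
  | PVtx.z i, PVtx.z j => (j : ℕ) = (i : ℕ) + 1
  | PVtx.u, PVtx.z j => (j : ℕ) = n - 1
  | _, _ => False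

/-- The primal graph of `QParity_n`. -/
def GParity (n : ℕ) : SimpleGraph (PVtx n) := SimpleGraph.fromRel (parityRel n)

/-- The trivial dependency poset of `QParity_n`: all the `x`'s precede `u`, which
precedes all the `z`'s. -/
def parityDep (n : ℕ) : PVtx n → PVtx n → Prop := fun a b =>
  a = b ∨ (∃ i, a = PVtx.x i ∧ (b = PVtx.u ∨ ∃ j, b = PVtx.z j)) ∨
    (a = PVtx.u ∧ ∃ j, b = PVtx.z j)

/-- Fill-in adjacency of a graph `G` w.r.t. an elimination ordering given by positions
`pos`: two distinct vertices are adjacent in the fill-in graph iff they are joined by a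
walk all of whose internal vertices are eliminated before both of them. -/
def fillAdj {α : Type} (G : SimpleGraph α) (pos : α → ℕ) (a b : α) : Prop :=
  a ≠ b ∧ ∃ p : G.Walk a b,
    ∀ c ∈ p.support, c ≠ a → c ≠ b → pos c < pos a ∧ pos c < pos b

/-- The directed graph `D^{trv}_{QParity_n}`: every primal edge in both directions,
plus a directed edge `(a,b)` whenever `a` strictly precedes `b` in the trivial
dependency order. -/
def dstep (n : ℕ) : PVtx n → PVtx n → Prop := fun a b =>
  (GParity n).Adj a b ∨ (∃ i j, a = PVtx.x i ∧ b = PVtx.z j) ∨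
    (∃ i, a = PVtx.x i ∧ b = PVtx.u) ∨ (∃ j, a = PVtx.u ∧ b = PVtx.z j)

instance (n : ℕ) : Finite (PVtx n) := by
  have h : Function.Injective (fun v : PVtx n => match v with
      | PVtx.x i => Sum.inl i
      | PVtx.z i => Sum.inr (Sum.inl i)
      | PVtx.u => (Sum.inr (Sum.inr ()) : Fin n ⊕ Fin n ⊕ Unit)) := by
    intro a b hab
    cases a <;> cases b <;> simp_all
  exact Finite.of_injective _ h

lemma zadj (n : ℕ) (k : ℕ) (hk : k + 1 < n) :
    (GParity n).Adj (PVtx.z ⟨k, by omega⟩) (PVtx.z ⟨k + 1, hk⟩) := by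
  rw [GParity, SimpleGraph.fromRel_adj]
  exact ⟨by simp [Fin.ext_iff], Or.inl rfl⟩

lemma zwalk (n : ℕ) (a : Fin n) (d : ℕ) (h : a.val + d < n) :
    ∃ p : (GParity n).Walk (PVtx.z a) (PVtx.z ⟨a.val + d, h⟩),
      ∀ c ∈ p.support, ∃ k : Fin n, c = PVtx.z k := by
  induction d with
  | zero =>
    have heq : PVtx.z a = PVtx.z (⟨a.val + 0, h⟩ : Fin n) :=
      congrArg PVtx.z (Fin.ext (by simp))
    refine ⟨SimpleGraph.Walk.nil.copy rfl heq, ?_⟩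
    intro c hc
    simp only [SimpleGraph.Walk.support_copy, SimpleGraph.Walk.support_nil,
      List.mem_singleton] at hc
    exact ⟨a, hc⟩
  | succ d ih =>
    obtain ⟨p, hp⟩ := ih (by omega)
    refine ⟨p.concat (zadj n (a.val + d) h), ?_⟩
    intro c hc
    simp only [SimpleGraph.Walk.support_concat, List.concat_eq_append, List.mem_append, List.mem_singleton] at hc
    rcases hc with hc | hc
    · exact hp c hc
    · exact ⟨_, hc⟩

lemma zwalk' (n : ℕ) (a b : Fin n) :
    ∃ p : (GParity n).Walk (PVtx.z a) (PVtx.z b),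
      ∀ c ∈ p.support, ∃ k : Fin n, c = PVtx.z k := by
  rcases le_total a b with hab | hab
  · have h : a.val + (b.val - a.val) < n := by omega
    have hb : (⟨a.val + (b.val - a.val), h⟩ : Fin n) = b := by
      apply Fin.ext
      simp only []
      omega
    obtain ⟨p, hp⟩ := zwalk n a (b.val - a.val) h
    refine ⟨p.copy rfl (congrArg PVtx.z hb), ?_⟩
    intro c hc
    rw [SimpleGraph.Walk.support_copy] at hc
    exact hp c hc
  · have h : b.val + (a.val - b.val) < n := by omega
    have ha : (⟨b.val + (a.val - b.val), h⟩ : Fin n) = a := by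
      apply Fin.ext
      simp only []
      omega
    obtain ⟨p, hp⟩ := zwalk n b (a.val - b.val) h
    refine ⟨(p.copy rfl (congrArg PVtx.z ha)).reverse, ?_⟩
    intro c hc
    rw [SimpleGraph.Walk.support_reverse, List.mem_reverse,
      SimpleGraph.Walk.support_copy] at hc
    exact hp c hc

/-- for every `n ≥ 2` and every elimination ordering of the primal
graph of `QParity_n` eliminating all of `{z₁,…,z_n}` before `u` and before all of
`{x₁,…,x_n}`, the last eliminated `z`-vertex is adjacent in the fill-in graph to every
`x_j` and to `u`; hence the ordering has width at least `n + 1`. -/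
theorem stmt9 (n : ℕ) (hn : 2 ≤ n)
    (pos : PVtx n → ℕ) (hinj : Function.Injective pos)
    (hzu : ∀ i : Fin n, pos (PVtx.z i) < pos PVtx.u)
    (hux : ∀ i : Fin n, pos PVtx.u < pos (PVtx.x i))
    (i : Fin n) (hlast : ∀ j : Fin n, pos (PVtx.z j) ≤ pos (PVtx.z i)) :
    (∀ j : Fin n, fillAdj (GParity n) pos (PVtx.z i) (PVtx.x j)) ∧
    fillAdj (GParity n) pos (PVtx.z i) PVtx.u ∧
    n + 1 ≤
      Set.ncard { b | fillAdj (GParity n) pos (PVtx.z i) b ∧ pos (PVtx.z i) < pos b } := by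
  have hzlt : ∀ j : Fin n, j ≠ i → pos (PVtx.z j) < pos (PVtx.z i) := by
    intro j hj
    refine lt_of_le_of_ne (hlast j) (fun h => hj ?_)
    have := hinj h
    injection this
  have hzx : ∀ j k : Fin n, pos (PVtx.z j) < pos (PVtx.x k) :=
    fun j k => (hzu j).trans (hux k)
  have hx : ∀ j : Fin n, fillAdj (GParity n) pos (PVtx.z i) (PVtx.x j) := by
    intro j
    refine ⟨by simp, ?_⟩
    obtain ⟨p, hp⟩ := zwalk' n i j
    have adj : (GParity n).Adj (PVtx.z j) (PVtx.x j) := by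
      rw [GParity, SimpleGraph.fromRel_adj]
      exact ⟨by simp, Or.inr (Or.inl rfl)⟩
    refine ⟨p.concat adj, ?_⟩
    intro c hc hc1 hc2
    simp only [SimpleGraph.Walk.support_concat, List.concat_eq_append, List.mem_append, List.mem_singleton] at hc
    rcases hc with hc | hc
    · obtain ⟨k, rfl⟩ := hp c hc
      have hki : k ≠ i := fun h => hc1 (by rw [h])
      exact ⟨hzlt k hki, hzx k j⟩
    · exact absurd hc hc2
  have hnm : n - 1 < n := by omega
  have hu : fillAdj (GParity n) pos (PVtx.z i) PVtx.u := by
    refine ⟨by simp, ?_⟩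
    obtain ⟨p, hp⟩ := zwalk' n i ⟨n - 1, hnm⟩
    have adj : (GParity n).Adj (PVtx.z ⟨n - 1, hnm⟩) PVtx.u := by
      rw [GParity, SimpleGraph.fromRel_adj]
      exact ⟨by simp, Or.inr rfl⟩
    refine ⟨p.concat adj, ?_⟩
    intro c hc hc1 hc2
    simp only [SimpleGraph.Walk.support_concat, List.concat_eq_append, List.mem_append, List.mem_singleton] at hc
    rcases hc with hc | hc
    · obtain ⟨k, rfl⟩ := hp c hc
      have hki : k ≠ i := fun h => hc1 (by rw [h])
      exact ⟨hzlt k hki, hzu k⟩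
    · exact absurd hc hc2
  refine ⟨hx, hu, ?_⟩
  have hxinj : Function.Injective (PVtx.x : Fin n → PVtx n) := by
    intro a b h; injection h
  have hsub : (Set.range (PVtx.x : Fin n → PVtx n) ∪ {PVtx.u}) ⊆
      { b | fillAdj (GParity n) pos (PVtx.z i) b ∧ pos (PVtx.z i) < pos b } := by
    rintro b (⟨j, rfl⟩ | rfl)
    · exact ⟨hx j, (hzu i).trans (hux j)⟩
    · exact ⟨hu, hzu i⟩
  have hcard : (Set.range (PVtx.x : Fin n → PVtx n) ∪ {PVtx.u}).ncard = n + 1 := by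
    have hdisj : Disjoint (Set.range (PVtx.x : Fin n → PVtx n)) {PVtx.u} := by
      rw [Set.disjoint_singleton_right]
      rintro ⟨j, h⟩
      cases h
    rw [Set.ncard_union_eq hdisj (Set.toFinite _) (Set.toFinite _),
      Set.ncard_singleton, ← Set.image_univ, Set.ncard_image_of_injective _ hxinj,
      Set.ncard_univ]
    simp
  calc n + 1 = (Set.range (PVtx.x : Fin n → PVtx n) ∪ {PVtx.u}).ncard := hcard.symm
    _ ≤ _ := Set.ncard_le_ncard hsub (Set.toFinite _)
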